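/- Let K = ℓ²(ℤ₊ × ℤ₊, ℂ) and define S₁, S₂ ∈ L(K) by (S₁f)(i,j) = f(i+1, j) and (S₂f)(i,j) = f(i, j+1). Then S₁ and S₂ are commuting surjections, each of S₁ and S₂ has infinite-dimensional kernel (so each is a universal operator on K), but the joint kernel Ker(S₁) ∩ Ker(S₂) is one-dimensional (spanned by the standard basis vector supported at (0,0)); consequently the pair (S₁, S₂) is not a universal commuting pair. -/

import Mathlib

noncomputable section

/-- Universal operator on a complex Hilbert space. -/
def IsUniversal {H : Type*} [NormedAddCommGroup H] [InnerProductSpace ℂ H]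
    (U : H →L[ℂ] H) : Prop :=
  ∀ T : H →L[ℂ] H, ∃ M : Submodule ℂ H, IsClosed (M : Set H) ∧ (∀ x ∈ M, U x ∈ M) ∧
    ∃ c : ℂ, c ≠ 0 ∧ ∃ J : H ≃L[ℂ] M, ∀ x : H, U (J x : H) = c • ((J (T x) : H))

/-- A commuting pair `(U₁, U₂)` is a *universal commuting pair* if for every commuting pair
`(S₁, S₂)` there are a nonzero `c ∈ ℂ`, a closed subspace `M` invariant under both `U₁` and
`U₂`, and a continuous linear isomorphism `V : H ≃ M` with `Uᵢ (V x) = c • V (Sᵢ x)` for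
all `x` and `i = 1, 2`. -/
def IsUniversalPair {H : Type*} [NormedAddCommGroup H] [InnerProductSpace ℂ H]
    (U₁ U₂ : H →L[ℂ] H) : Prop :=
  U₁.comp U₂ = U₂.comp U₁ ∧
  ∀ S₁ S₂ : H →L[ℂ] H, S₁.comp S₂ = S₂.comp S₁ →
    ∃ M : Submodule ℂ H, IsClosed (M : Set H) ∧
      (∀ x ∈ M, U₁ x ∈ M) ∧ (∀ x ∈ M, U₂ x ∈ M) ∧
      ∃ c : ℂ, c ≠ 0 ∧ ∃ V : H ≃L[ℂ] M,
        (∀ x : H, U₁ (V x : H) = c • ((V (S₁ x) : H))) ∧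
        (∀ x : H, U₂ (V x : H) = c • ((V (S₂ x) : H)))

namespace ShiftAux
open Function
open scoped ENNReal NNReal

variable {κ ι : Type*}

lemma memℓp_extend {g : κ → ι} (hg : Injective g) (f : lp (fun _ : κ => ℂ) 2) :
    Memℓp (Function.extend g ⇑f 0) 2 := by
  apply memℓp_gen
  have key : (fun i => ‖Function.extend g (⇑f) 0 i‖ ^ (2:ℝ≥0∞).toReal)
      = Function.extend g (fun k => ‖f k‖ ^ (2:ℝ≥0∞).toReal) 0 := by
    funext i
    by_cases h : ∃ k, g k = i
    · obtain ⟨k, rfl⟩ := h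
      rw [hg.extend_apply, hg.extend_apply]
    · rw [Function.extend_apply' _ _ _ h, Function.extend_apply' _ _ _ h]
      simp
  rw [key]
  exact (summable_extend_zero hg).2 ((lp.memℓp f).summable (by norm_num))

/-- Extension by zero along an injection, as a linear isometry of `ℓ²` spaces. -/
def extIso {g : κ → ι} (hg : Injective g) :
    lp (fun _ : κ => ℂ) 2 →ₗᵢ[ℂ] lp (fun _ : ι => ℂ) 2 where
  toFun f := ⟨Function.extend g ⇑f 0, memℓp_extend hg f⟩
  map_add' f₁ f₂ := by
    apply lp.ext
    funext i
    by_cases h : ∃ k, g k = i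
    · obtain ⟨k, rfl⟩ := h
      simp only [lp.coeFn_add, Pi.add_apply]
      erw [hg.extend_apply, hg.extend_apply, hg.extend_apply]
      simp [lp.coeFn_add]
    · simp only [lp.coeFn_add, Pi.add_apply]
      erw [Function.extend_apply' _ _ _ h, Function.extend_apply' _ _ _ h,
        Function.extend_apply' _ _ _ h]
      simp
  map_smul' c f := by
    apply lp.ext
    funext i
    by_cases h : ∃ k, g k = i
    · obtain ⟨k, rfl⟩ := h
      simp only [lp.coeFn_smul, Pi.smul_apply]
      erw [hg.extend_apply, hg.extend_apply]
      simp [lp.coeFn_smul]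
    · simp only [lp.coeFn_smul, Pi.smul_apply]
      erw [Function.extend_apply' _ _ _ h, Function.extend_apply' _ _ _ h]
      simp
  norm_map' f := by
    have hp : 0 < (2:ℝ≥0∞).toReal := by norm_num
    rw [lp.norm_eq_tsum_rpow hp, lp.norm_eq_tsum_rpow hp]
    congr 1
    have hsupp : Function.support (fun i => ‖Function.extend g (⇑f) 0 i‖ ^ (2:ℝ≥0∞).toReal)
        ⊆ Set.range g := by
      intro i hi
      by_contra h
      apply hi
      simp only []
      rw [Function.extend_apply' _ _ _ (by simpa [Set.range] using h)]
      simp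
    have h2 := hg.tsum_eq (f := fun i => ‖Function.extend g (⇑f) 0 i‖ ^ (2:ℝ≥0∞).toReal) hsupp
    calc ∑' (i : ι), ‖Function.extend g (⇑f) 0 i‖ ^ (2:ℝ≥0∞).toReal
        = ∑' (k : κ), ‖Function.extend g (⇑f) 0 (g k)‖ ^ (2:ℝ≥0∞).toReal := h2.symm
      _ = ∑' (k : κ), ‖f k‖ ^ (2:ℝ≥0∞).toReal := by
          congr 1
          funext k
          rw [hg.extend_apply]

lemma extIso_apply {g : κ → ι} (hg : Injective g) (f : lp (fun _ : κ => ℂ) 2) (i : ι) :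
    (extIso hg f) i = Function.extend g (⇑f) 0 i := rfl

/-- Caradus' criterion: a surjection with an isometric embedding into its kernel is universal. -/
lemma caradus {H : Type*} [NormedAddCommGroup H] [InnerProductSpace ℂ H] [CompleteSpace H]
    (U R W : H →L[ℂ] H) (hUR : U * R = 1) (hWn : ∀ x, ‖W x‖ = ‖x‖)
    (hWk : ∀ x, U (W x) = 0) : IsUniversal U := by
  intro T
  set r : ℝ := (3 * (‖R‖ + 1) * (‖T‖ + 1))⁻¹ with hr
  have hRpos : (0:ℝ) < ‖R‖ + 1 := by positivity
  have hTpos : (0:ℝ) < ‖T‖ + 1 := by positivity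
  have hrpos : 0 < r := by positivity
  set c : ℂ := (r : ℂ) with hcdef
  have hc : c ≠ 0 := by
    simp only [hcdef, ne_eq, Complex.ofReal_eq_zero]
    exact hrpos.ne'
  have hcn : ‖c‖ = r := by
    simp [hcdef, abs_of_pos hrpos]
  have hWop : ‖W‖ ≤ 1 := W.opNorm_le_bound zero_le_one (by intro x; rw [hWn]; simp)
  set A : ℕ → (H →L[ℂ] H) := fun n => c ^ n • (R ^ n * W * T ^ n) with hA
  have hpow : ∀ (S : H →L[ℂ] H) (n : ℕ), ‖S ^ n‖ ≤ ‖S‖ ^ n := by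
    intro S n
    induction n with
    | zero => rw [pow_zero, pow_zero]; exact ContinuousLinearMap.norm_id_le
    | succ n ih =>
        calc ‖S ^ (n+1)‖ = ‖S ^ n * S‖ := by rw [pow_succ]
          _ ≤ ‖S ^ n‖ * ‖S‖ := norm_mul_le _ _
          _ ≤ ‖S‖ ^ n * ‖S‖ := by gcongr
          _ = ‖S‖ ^ (n+1) := by rw [pow_succ]
  have hAbound : ∀ n, ‖A n‖ ≤ (1/3 : ℝ) ^ n := by
    intro n
    have h1 : ‖A n‖ ≤ ‖c‖ ^ n * (‖R‖ ^ n * ‖W‖ * ‖T‖ ^ n) := by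
      rw [hA]
      simp only
      rw [norm_smul, norm_pow]
      gcongr
      calc ‖R ^ n * W * T ^ n‖ ≤ ‖R ^ n * W‖ * ‖T ^ n‖ := norm_mul_le _ _
        _ ≤ ‖R ^ n‖ * ‖W‖ * ‖T ^ n‖ := by gcongr; exact norm_mul_le _ _
        _ ≤ ‖R‖ ^ n * ‖W‖ * ‖T‖ ^ n := by gcongr <;> [exact hpow _ _ ; exact hpow _ _]
    have h2 : ‖c‖ ^ n * (‖R‖ ^ n * ‖W‖ * ‖T‖ ^ n) ≤ (r * (‖R‖ * ‖T‖)) ^ n * 1 := by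
      rw [hcn]
      rw [mul_pow, mul_pow]
      calc r ^ n * (‖R‖ ^ n * ‖W‖ * ‖T‖ ^ n) ≤ r ^ n * (‖R‖ ^ n * 1 * ‖T‖ ^ n) := by
            gcongr
        _ = r ^ n * (‖R‖ ^ n * ‖T‖ ^ n) * 1 := by ring
    have h3 : r * (‖R‖ * ‖T‖) ≤ 1/3 := by
      have hle : ‖R‖ * ‖T‖ ≤ (‖R‖ + 1) * (‖T‖ + 1) := by nlinarith [norm_nonneg R, norm_nonneg T]
      rw [hr]
      rw [inv_mul_le_iff₀ (by positivity)]
      nlinarith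
    have h4 : (r * (‖R‖ * ‖T‖)) ^ n ≤ (1/3:ℝ) ^ n := by
      apply pow_le_pow_left₀ (by positivity) h3
    calc ‖A n‖ ≤ ‖c‖ ^ n * (‖R‖ ^ n * ‖W‖ * ‖T‖ ^ n) := h1
      _ ≤ (r * (‖R‖ * ‖T‖)) ^ n * 1 := h2
      _ = (r * (‖R‖ * ‖T‖)) ^ n := mul_one _
      _ ≤ (1/3:ℝ) ^ n := h4
  have hgeo : Summable (fun n : ℕ => (1/3 : ℝ) ^ n) :=
    summable_geometric_of_lt_one (by norm_num) (by norm_num)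
  have hAsum : Summable A := Summable.of_norm_bounded hgeo hAbound
  set J : H →L[ℂ] H := ∑' n, A n with hJ
  have hJsum : HasSum A J := hAsum.hasSum
  have hA0 : A 0 = W := by simp [hA]
  have hURpow : ∀ n, U * R ^ (n+1) = R ^ n := by
    intro n
    rw [pow_succ']
    rw [← mul_assoc, hUR, one_mul]
  have hUA0 : U * A 0 = 0 := by
    rw [hA0]
    ext x
    simp [ContinuousLinearMap.mul_apply, hWk]
  have hUAsucc : ∀ n, U * A (n+1) = c • (A n * T) := by
    intro n
    simp only [hA]
    rw [mul_smul_comm, smul_mul_assoc, smul_smul, ← pow_succ']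
    congr 1
    rw [← mul_assoc, ← mul_assoc, hURpow, mul_assoc, mul_assoc, ← pow_succ, ← mul_assoc]
  have hUJ : HasSum (fun n => U * A n) (U * J) := by
    have := hJsum.mapL (ContinuousLinearMap.mul ℂ (H →L[ℂ] H) U)
    simpa [ContinuousLinearMap.mul_apply'] using this
  have hJT : HasSum (fun n => c • (A n * T)) (c • (J * T)) := by
    have := (hJsum.mapL ((ContinuousLinearMap.mul ℂ (H →L[ℂ] H)).flip T)).const_smul c
    simpa [ContinuousLinearMap.mul_apply'] using this
  have hkey : U * J = c • (J * T) := by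
    have h1 : (∑' n, U * A n) = U * J := hUJ.tsum_eq
    have h2 : (∑' n, U * A n) = U * A 0 + ∑' n, U * A (n + 1) := by
      exact Summable.tsum_eq_zero_add hUJ.summable
    have h3 : (∑' n, U * A (n+1)) = ∑' n, c • (A n * T) := by
      congr 1
      funext n
      exact hUAsucc n
    rw [← h1, h2, hUA0, zero_add, h3, hJT.tsum_eq]
  have htail : ‖J - W‖ ≤ 1/2 := by
    have h2 : J = A 0 + ∑' n, A (n + 1) := Summable.tsum_eq_zero_add hAsum
    have h4 : ‖∑' n, A (n+1)‖ ≤ ∑' n : ℕ, (1/3:ℝ) ^ (n+1) := by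
      apply tsum_of_norm_bounded (((summable_nat_add_iff 1).2 hgeo).hasSum)
      intro n; exact hAbound (n+1)
    have h5 : (∑' n : ℕ, (1/3:ℝ) ^ (n+1)) = 1/2 := by
      have : (∑' n : ℕ, (1/3:ℝ) ^ (n+1)) = ∑' n : ℕ, (1/3:ℝ) * (1/3:ℝ) ^ n := by
        congr 1; funext n; ring
      rw [this, tsum_mul_left, tsum_geometric_of_lt_one (by norm_num) (by norm_num)]
      norm_num
    have : J - W = ∑' n, A (n+1) := by rw [h2, hA0]; abel
    rw [this]
    rw [← h5] at *
    exact h4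
  have hlow : ∀ x, ‖x‖ ≤ (2:ℝ≥0) * ‖J x‖ := by
    intro x
    have h1 : ‖J x - W x‖ ≤ (1/2) * ‖x‖ := by
      have := (J - W).le_opNorm x
      rw [ContinuousLinearMap.sub_apply] at this
      calc ‖J x - W x‖ ≤ ‖J - W‖ * ‖x‖ := this
        _ ≤ (1/2) * ‖x‖ := by gcongr
    have h2 : ‖W x‖ - ‖J x‖ ≤ ‖J x - W x‖ := by
      have h' := norm_sub_norm_le (W x) (J x)
      calc ‖W x‖ - ‖J x‖ ≤ ‖W x - J x‖ := h'
        _ = ‖J x - W x‖ := norm_sub_rev _ _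
    rw [hWn] at h2
    push_cast
    linarith
  have hanti : AntilipschitzWith 2 J := J.antilipschitz_of_bound hlow
  have hinj : Function.Injective J := hanti.injective
  have hclosedrange : IsClosed (Set.range J) := hanti.isClosed_range J.uniformContinuous
  refine ⟨LinearMap.range (J : H →ₗ[ℂ] H), ?_, ?_, c, hc, ?_⟩
  · rw [LinearMap.coe_range]
    exact hclosedrange
  · rintro x ⟨y, rfl⟩
    refine ⟨c • T y, ?_⟩
    have := congrArg (fun (S : H →L[ℂ] H) => S y) hkey
    simp only [ContinuousLinearMap.mul_apply, ContinuousLinearMap.smul_apply] at this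
    simp only [map_smul]
    exact this.symm
  · haveI : CompleteSpace (LinearMap.range (J : H →ₗ[ℂ] H)) := by
      rw [← ContinuousLinearMap.coe_coe, ← LinearMap.coe_range (f := (J : H →ₗ[ℂ] H))] at hclosedrange
      exact hclosedrange.completeSpace_coe
    set Je : H →L[ℂ] LinearMap.range (J : H →ₗ[ℂ] H) :=
      J.codRestrict (LinearMap.range (J : H →ₗ[ℂ] H)) (fun x => LinearMap.mem_range_self _ x) with hJe
    have hkerJe : LinearMap.ker (Je : H →ₗ[ℂ] LinearMap.range (J : H →ₗ[ℂ] H)) = ⊥ := by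
      rw [LinearMap.ker_eq_bot']
      intro m hm
      apply hinj
      have : (Je m : H) = ((0 : LinearMap.range (J : H →ₗ[ℂ] H)) : H) := by rw [← ContinuousLinearMap.coe_coe, hm]
      simpa [hJe] using this
    have hrangeJe : LinearMap.range (Je : H →ₗ[ℂ] LinearMap.range (J : H →ₗ[ℂ] H)) = ⊤ := by
      rw [LinearMap.range_eq_top]
      rintro ⟨x, y, rfl⟩
      exact ⟨y, rfl⟩
    refine ⟨ContinuousLinearEquiv.ofBijective Je hkerJe hrangeJe, ?_⟩
    intro x
    simp only [ContinuousLinearEquiv.coeFn_ofBijective]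
    have h1 : (Je x : H) = J x := rfl
    have h2 : (Je (T x) : H) = J (T x) := rfl
    rw [h1, h2]
    have := congrArg (fun (S : H →L[ℂ] H) => S x) hkey
    simpa [ContinuousLinearMap.mul_apply] using this

/-- Linear independence of distinct `lp.single`s. -/
lemma linearIndependent_single {ι : Type*} [DecidableEq ι] {e : ℕ → ι} (he : Injective e) :
    LinearIndependent ℂ (fun n => lp.single (E := fun _ : ι => ℂ) 2 (e n) (1:ℂ)) := by
  rw [linearIndependent_iff']
  intro s g hsum n hn
  have hc := congrFun (congrArg
    (fun v : lp (fun _ : ι => ℂ) 2 => (v : ∀ _ : ι, ℂ)) hsum) (e n)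
  simp only [lp.coeFn_sum, Finset.sum_apply, lp.coeFn_smul, Pi.smul_apply, smul_eq_mul,
    lp.coeFn_zero, Pi.zero_apply] at hc
  rw [Finset.sum_eq_single n (fun b _ hb => by
      rw [lp.single_apply_ne 2 (e b) _ (fun h => hb (he h).symm), mul_zero])
    (fun h => absurd hn h)] at hc
  rw [lp.single_apply_self] at hc
  simpa using hc

end ShiftAux

open ShiftAux Function in
theorem shift_pair_on_scalar_l2_not_universal
    (S₁ S₂ : lp (fun _ : ℕ × ℕ => ℂ) 2 →L[ℂ] lp (fun _ : ℕ × ℕ => ℂ) 2)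
    (hS₁ : ∀ (f : lp (fun _ : ℕ × ℕ => ℂ) 2) (i j : ℕ), (S₁ f) (i, j) = f (i + 1, j))
    (hS₂ : ∀ (f : lp (fun _ : ℕ × ℕ => ℂ) 2) (i j : ℕ), (S₂ f) (i, j) = f (i, j + 1)) :
    S₁.comp S₂ = S₂.comp S₁ ∧
    Function.Surjective S₁ ∧ Function.Surjective S₂ ∧
    ¬ FiniteDimensional ℂ (LinearMap.ker (S₁ : lp (fun _ : ℕ × ℕ => ℂ) 2 →ₗ[ℂ] lp (fun _ : ℕ × ℕ => ℂ) 2)) ∧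
    ¬ FiniteDimensional ℂ (LinearMap.ker (S₂ : lp (fun _ : ℕ × ℕ => ℂ) 2 →ₗ[ℂ] lp (fun _ : ℕ × ℕ => ℂ) 2)) ∧
    IsUniversal S₁ ∧ IsUniversal S₂ ∧
    (LinearMap.ker (S₁ : lp (fun _ : ℕ × ℕ => ℂ) 2 →ₗ[ℂ] lp (fun _ : ℕ × ℕ => ℂ) 2) ⊓ LinearMap.ker (S₂ : lp (fun _ : ℕ × ℕ => ℂ) 2 →ₗ[ℂ] lp (fun _ : ℕ × ℕ => ℂ) 2) : Submodule ℂ (lp (fun _ : ℕ × ℕ => ℂ) 2)) =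
      Submodule.span ℂ {lp.single 2 ((0 : ℕ), (0 : ℕ)) (1 : ℂ)} ∧
    ¬ IsUniversalPair S₁ S₂ := by
  classical
  -- injections
  have hg1 : Injective (fun p : ℕ × ℕ => (p.1 + 1, p.2)) := by
    rintro ⟨a, b⟩ ⟨c, d⟩ h
    simp only [Prod.mk.injEq] at h
    exact Prod.ext (by omega) h.2
  have hg2 : Injective (fun p : ℕ × ℕ => (p.1, p.2 + 1)) := by
    rintro ⟨a, b⟩ ⟨c, d⟩ h
    simp only [Prod.mk.injEq] at h
    exact Prod.ext h.1 (by omega)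
  have hpair : Injective (fun p : ℕ × ℕ => Nat.pair p.1 p.2) := by
    rintro ⟨a, b⟩ ⟨c, d⟩ h
    simp only at h
    have := Nat.pair_eq_pair.1 h
    exact Prod.ext this.1 this.2
  have hw1 : Injective (fun p : ℕ × ℕ => ((0 : ℕ), Nat.pair p.1 p.2)) := by
    intro a b h
    exact hpair (by simpa [Prod.ext_iff] using h)
  have hw2 : Injective (fun p : ℕ × ℕ => (Nat.pair p.1 p.2, (0 : ℕ))) := by
    intro a b h
    exact hpair (by simpa [Prod.ext_iff] using h)
  set R₁ := (extIso hg1).toContinuousLinearMap with hR₁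
  set R₂ := (extIso hg2).toContinuousLinearMap with hR₂
  set W₁ := (extIso hw1).toContinuousLinearMap with hW₁
  set W₂ := (extIso hw2).toContinuousLinearMap with hW₂
  -- right inverses
  have hSR₁ : ∀ f, S₁ (R₁ f) = f := by
    intro f
    apply lp.ext
    funext p
    obtain ⟨i, j⟩ := p
    rw [hS₁]
    exact hg1.extend_apply (⇑f) 0 (i, j)
  have hSR₂ : ∀ f, S₂ (R₂ f) = f := by
    intro f
    apply lp.ext
    funext p
    obtain ⟨i, j⟩ := p
    rw [hS₂]
    exact hg2.extend_apply (⇑f) 0 (i, j)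
  -- isometries into kernels
  have hW₁k : ∀ f, S₁ (W₁ f) = 0 := by
    intro f
    apply lp.ext
    funext p
    obtain ⟨i, j⟩ := p
    rw [lp.coeFn_zero, Pi.zero_apply, hS₁]
    have h : ¬∃ k : ℕ × ℕ, ((0 : ℕ), Nat.pair k.1 k.2) = (i + 1, j) := by
      rintro ⟨k, hk⟩
      simp only [Prod.mk.injEq] at hk
      omega
    exact Function.extend_apply' _ _ _ h
  have hW₂k : ∀ f, S₂ (W₂ f) = 0 := by
    intro f
    apply lp.ext
    funext p
    obtain ⟨i, j⟩ := p
    rw [lp.coeFn_zero, Pi.zero_apply, hS₂]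
    have h : ¬∃ k : ℕ × ℕ, (Nat.pair k.1 k.2, (0 : ℕ)) = (i, j + 1) := by
      rintro ⟨k, hk⟩
      simp only [Prod.mk.injEq] at hk
      omega
    exact Function.extend_apply' _ _ _ h
  -- commuting
  have hcomm : S₁.comp S₂ = S₂.comp S₁ := by
    refine ContinuousLinearMap.ext fun f => ?_
    apply lp.ext
    funext p
    obtain ⟨i, j⟩ := p
    simp only [ContinuousLinearMap.comp_apply]
    rw [hS₁, hS₂, hS₂, hS₁]
  refine ⟨hcomm, fun f => ⟨R₁ f, hSR₁ f⟩, fun f => ⟨R₂ f, hSR₂ f⟩, ?_, ?_, ?_, ?_, ?_, ?_⟩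
  -- kernels infinite dimensional
  · intro hFD
    have hmem : ∀ n : ℕ, lp.single (E := fun _ : ℕ × ℕ => ℂ) 2 ((0 : ℕ), n) (1:ℂ)
        ∈ LinearMap.ker (S₁ : lp (fun _ : ℕ × ℕ => ℂ) 2 →ₗ[ℂ] lp (fun _ : ℕ × ℕ => ℂ) 2) := by
      intro n
      rw [LinearMap.mem_ker]
      apply lp.ext
      funext p
      obtain ⟨i, j⟩ := p
      rw [lp.coeFn_zero, Pi.zero_apply, ContinuousLinearMap.coe_coe, hS₁]
      exact lp.single_apply_ne 2 _ _ (by simp [Prod.ext_iff])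
    set v : ℕ → LinearMap.ker (S₁ : lp (fun _ : ℕ × ℕ => ℂ) 2 →ₗ[ℂ] lp (fun _ : ℕ × ℕ => ℂ) 2) := fun n => ⟨_, hmem n⟩ with hv
    have hvi : LinearIndependent ℂ v := by
      apply LinearIndependent.of_comp (LinearMap.ker (S₁ : lp (fun _ : ℕ × ℕ => ℂ) 2 →ₗ[ℂ] lp (fun _ : ℕ × ℕ => ℂ) 2)).subtype
      exact linearIndependent_single (fun a b h => by
        simpa [Prod.ext_iff] using h)
    exact Module.Finite.not_linearIndependent_of_infinite v hvi
  · intro hFD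
    have hmem : ∀ n : ℕ, lp.single (E := fun _ : ℕ × ℕ => ℂ) 2 (n, (0 : ℕ)) (1:ℂ)
        ∈ LinearMap.ker (S₂ : lp (fun _ : ℕ × ℕ => ℂ) 2 →ₗ[ℂ] lp (fun _ : ℕ × ℕ => ℂ) 2) := by
      intro n
      rw [LinearMap.mem_ker]
      apply lp.ext
      funext p
      obtain ⟨i, j⟩ := p
      rw [lp.coeFn_zero, Pi.zero_apply, ContinuousLinearMap.coe_coe, hS₂]
      exact lp.single_apply_ne 2 _ _ (by simp [Prod.ext_iff])
    set v : ℕ → LinearMap.ker (S₂ : lp (fun _ : ℕ × ℕ => ℂ) 2 →ₗ[ℂ] lp (fun _ : ℕ × ℕ => ℂ) 2) := fun n => ⟨_, hmem n⟩ with hv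
    have hvi : LinearIndependent ℂ v := by
      apply LinearIndependent.of_comp (LinearMap.ker (S₂ : lp (fun _ : ℕ × ℕ => ℂ) 2 →ₗ[ℂ] lp (fun _ : ℕ × ℕ => ℂ) 2)).subtype
      exact linearIndependent_single (fun a b h => by
        simpa [Prod.ext_iff] using h)
    exact Module.Finite.not_linearIndependent_of_infinite v hvi
  -- universality
  · apply caradus S₁ R₁ W₁ ?_ (extIso hw1).norm_map hW₁k
    refine ContinuousLinearMap.ext fun f => ?_
    simp only [ContinuousLinearMap.mul_apply, ContinuousLinearMap.one_apply]
    exact hSR₁ f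
  · apply caradus S₂ R₂ W₂ ?_ (extIso hw2).norm_map hW₂k
    refine ContinuousLinearMap.ext fun f => ?_
    simp only [ContinuousLinearMap.mul_apply, ContinuousLinearMap.one_apply]
    exact hSR₂ f
  -- joint kernel
  · apply le_antisymm
    · intro f hf
      obtain ⟨hf1, hf2⟩ := Submodule.mem_inf.1 hf
      rw [LinearMap.mem_ker] at hf1 hf2
      have hc1 : ∀ i j : ℕ, f (i + 1, j) = 0 := by
        intro i j
        have := congrFun (congrArg
          (fun v : lp (fun _ : ℕ × ℕ => ℂ) 2 => (v : ∀ _ : ℕ × ℕ, ℂ)) hf1) (i, j)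
        simp only [lp.coeFn_zero, Pi.zero_apply] at this
        rw [← hS₁ f i j]
        exact this
      have hc2 : ∀ i j : ℕ, f (i, j + 1) = 0 := by
        intro i j
        have := congrFun (congrArg
          (fun v : lp (fun _ : ℕ × ℕ => ℂ) 2 => (v : ∀ _ : ℕ × ℕ, ℂ)) hf2) (i, j)
        simp only [lp.coeFn_zero, Pi.zero_apply] at this
        rw [← hS₂ f i j]
        exact this
      rw [Submodule.mem_span_singleton]
      refine ⟨f ((0 : ℕ), (0 : ℕ)), ?_⟩
      apply lp.ext
      funext p
      obtain ⟨i, j⟩ := p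
      rw [lp.coeFn_smul, Pi.smul_apply, smul_eq_mul]
      match i, j with
      | 0, 0 => rw [lp.single_apply_self, mul_one]
      | (i+1), j =>
          rw [lp.single_apply_ne 2 _ _ (by simp [Prod.ext_iff]), mul_zero, hc1]
      | 0, (j+1) =>
          rw [lp.single_apply_ne 2 _ _ (by simp [Prod.ext_iff]), mul_zero, hc2]
    · rw [Submodule.span_le, Set.singleton_subset_iff]
      refine Submodule.mem_inf.2 ⟨?_, ?_⟩
      · rw [LinearMap.mem_ker]
        apply lp.ext
        funext p
        obtain ⟨i, j⟩ := p
        rw [lp.coeFn_zero, Pi.zero_apply, ContinuousLinearMap.coe_coe, hS₁]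
        exact lp.single_apply_ne 2 _ _ (by simp [Prod.ext_iff])
      · rw [LinearMap.mem_ker]
        apply lp.ext
        funext p
        obtain ⟨i, j⟩ := p
        rw [lp.coeFn_zero, Pi.zero_apply, ContinuousLinearMap.coe_coe, hS₂]
        exact lp.single_apply_ne 2 _ _ (by simp [Prod.ext_iff])
  -- not a universal pair
  · -- first, record the joint-kernel computation proved above
    have hker : (LinearMap.ker (S₁ : lp (fun _ : ℕ × ℕ => ℂ) 2 →ₗ[ℂ] lp (fun _ : ℕ × ℕ => ℂ) 2) ⊓ LinearMap.ker (S₂ : lp (fun _ : ℕ × ℕ => ℂ) 2 →ₗ[ℂ] lp (fun _ : ℕ × ℕ => ℂ) 2) :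
        Submodule ℂ (lp (fun _ : ℕ × ℕ => ℂ) 2)) =
        Submodule.span ℂ {lp.single 2 ((0 : ℕ), (0 : ℕ)) (1 : ℂ)} := by
      apply le_antisymm
      · intro f hf
        obtain ⟨hf1, hf2⟩ := Submodule.mem_inf.1 hf
        rw [LinearMap.mem_ker] at hf1 hf2
        have hc1 : ∀ i j : ℕ, f (i + 1, j) = 0 := by
          intro i j
          have := congrFun (congrArg
            (fun v : lp (fun _ : ℕ × ℕ => ℂ) 2 => (v : ∀ _ : ℕ × ℕ, ℂ)) hf1) (i, j)
          simp only [lp.coeFn_zero, Pi.zero_apply] at this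
          rw [← hS₁ f i j]
          exact this
        have hc2 : ∀ i j : ℕ, f (i, j + 1) = 0 := by
          intro i j
          have := congrFun (congrArg
            (fun v : lp (fun _ : ℕ × ℕ => ℂ) 2 => (v : ∀ _ : ℕ × ℕ, ℂ)) hf2) (i, j)
          simp only [lp.coeFn_zero, Pi.zero_apply] at this
          rw [← hS₂ f i j]
          exact this
        rw [Submodule.mem_span_singleton]
        refine ⟨f ((0 : ℕ), (0 : ℕ)), ?_⟩
        apply lp.ext
        funext p
        obtain ⟨i, j⟩ := p
        rw [lp.coeFn_smul, Pi.smul_apply, smul_eq_mul]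
        match i, j with
        | 0, 0 => rw [lp.single_apply_self, mul_one]
        | (i+1), j =>
            rw [lp.single_apply_ne 2 _ _ (by simp [Prod.ext_iff]), mul_zero, hc1]
        | 0, (j+1) =>
            rw [lp.single_apply_ne 2 _ _ (by simp [Prod.ext_iff]), mul_zero, hc2]
      · rw [Submodule.span_le, Set.singleton_subset_iff]
        refine Submodule.mem_inf.2 ⟨?_, ?_⟩
        · rw [LinearMap.mem_ker]
          apply lp.ext
          funext p
          obtain ⟨i, j⟩ := p
          rw [lp.coeFn_zero, Pi.zero_apply, ContinuousLinearMap.coe_coe, hS₁]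
          exact lp.single_apply_ne 2 _ _ (by simp [Prod.ext_iff])
        · rw [LinearMap.mem_ker]
          apply lp.ext
          funext p
          obtain ⟨i, j⟩ := p
          rw [lp.coeFn_zero, Pi.zero_apply, ContinuousLinearMap.coe_coe, hS₂]
          exact lp.single_apply_ne 2 _ _ (by simp [Prod.ext_iff])
    rintro ⟨-, hU⟩
    obtain ⟨M, -, -, -, c, hc, V, hV1, hV2⟩ := hU 0 0 (by simp)
    set u₀ : lp (fun _ : ℕ × ℕ => ℂ) 2 := lp.single 2 ((0 : ℕ), (0 : ℕ)) (1 : ℂ) with hu₀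
    have hVmem : ∀ x, ((V x : M) : lp (fun _ : ℕ × ℕ => ℂ) 2) ∈
        Submodule.span ℂ {u₀} := by
      intro x
      rw [← hker]
      refine Submodule.mem_inf.2 ⟨?_, ?_⟩
      · rw [LinearMap.mem_ker]
        have := hV1 x
        simpa using this
      · rw [LinearMap.mem_ker]
        have := hV2 x
        simpa using this
    set x₁ : lp (fun _ : ℕ × ℕ => ℂ) 2 := lp.single 2 ((1 : ℕ), (0 : ℕ)) (1 : ℂ) with hx₁
    set x₂ : lp (fun _ : ℕ × ℕ => ℂ) 2 := lp.single 2 ((0 : ℕ), (1 : ℕ)) (1 : ℂ) with hx₂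
    obtain ⟨a, ha⟩ := Submodule.mem_span_singleton.1 (hVmem x₁)
    obtain ⟨b, hb⟩ := Submodule.mem_span_singleton.1 (hVmem x₂)
    have hcomb : ((V (b • x₁ - a • x₂) : M) : lp (fun _ : ℕ × ℕ => ℂ) 2) = 0 := by
      rw [map_sub, map_smul, map_smul]
      push_cast
      rw [← ha, ← hb, smul_smul, smul_smul, mul_comm]
      abel
    have hzero : b • x₁ - a • x₂ = 0 := by
      apply V.injective
      rw [map_zero]
      exact Subtype.ext hcomb
    have hba : b • x₁ = a • x₂ := sub_eq_zero.1 hzero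
    have hcoord : ∀ p : ℕ × ℕ, b * x₁ p = a * x₂ p := by
      intro p
      have := congrFun (congrArg
        (fun v : lp (fun _ : ℕ × ℕ => ℂ) 2 => (v : ∀ _ : ℕ × ℕ, ℂ)) hba) p
      simpa [lp.coeFn_smul, Pi.smul_apply, smul_eq_mul] using this
    have hb0 : b = 0 := by
      have := hcoord ((1 : ℕ), (0 : ℕ))
      rw [hx₁, hx₂] at this
      rw [lp.single_apply_self, lp.single_apply_ne 2 _ _ (by simp [Prod.ext_iff])] at this
      simpa using this
    have ha0 : a = 0 := by
      have := hcoord ((0 : ℕ), (1 : ℕ))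
      rw [hx₁, hx₂] at this
      rw [lp.single_apply_self, lp.single_apply_ne 2 _ _ (by simp [Prod.ext_iff])] at this
      simpa using this.symm
    have hx₁0 : x₁ = 0 := by
      have hV0 : ((V x₁ : M) : lp (fun _ : ℕ × ℕ => ℂ) 2) = 0 := by
        rw [← ha, ha0, zero_smul]
      apply V.injective
      rw [map_zero]
      exact Subtype.ext hV0
    have : (x₁ : ∀ _ : ℕ × ℕ, ℂ) ((1 : ℕ), (0 : ℕ)) = 0 := by
      rw [hx₁0]
      simp [lp.coeFn_zero]
    rw [hx₁, lp.single_apply_self] at this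
    exact one_ne_zero this

end
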